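/- Define φ^∞ : Γ(A) → Γ(A) by φ^∞(a) = Σ_{k≥0} β₂^k β₁ a α₁ α₂^k, i.e., the matrix whose (2^{k+1}i + 2^k − 1, 2^{k+1}j + 2^k − 1) entry is a_{ij} and all other entries 0. Then φ^∞ is a well-defined ring endomorphism of Γ(A), and it satisfies β₁ a α₁ + β₂ φ^∞(a) α₂ = φ^∞(a) for all a (i.e., 1 ⊕ φ^∞ = φ^∞), making Γ(A) an infinite sum ring. -/
import Mathlib


variable {A : Type} [Ring A]

/-- The defining condition of `Γ(A)`. -/
def gCond (a : ℕ × ℕ → A) : Prop :=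
  (Set.range a).Finite ∧
  ∃ N : ℕ, ∀ i : ℕ,
    {j | a (i, j) ≠ 0}.Finite ∧ {j | a (i, j) ≠ 0}.ncard ≤ N ∧
    {j | a (j, i) ≠ 0}.Finite ∧ {j | a (j, i) ≠ 0}.ncard ≤ N

/-- Matrix multiplication in `Γ(A)`. -/
noncomputable def gMul (a b : ℕ × ℕ → A) : ℕ × ℕ → A :=
  fun p => ∑ᶠ j, a (p.1, j) * b (j, p.2)

/-- `α₁ = Σ_i e_{i,2i}`. -/
def alpha1 : ℕ × ℕ → A := fun p => if p.2 = 2 * p.1 then 1 else 0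
/-- `β₁ = Σ_i e_{2i,i}`. -/
def beta1 : ℕ × ℕ → A := fun p => if p.1 = 2 * p.2 then 1 else 0
/-- `α₂ = Σ_i e_{i,2i+1}`. -/
def alpha2 : ℕ × ℕ → A := fun p => if p.2 = 2 * p.1 + 1 then 1 else 0
/-- `β₂ = Σ_i e_{2i+1,i}`. -/
def beta2 : ℕ × ℕ → A := fun p => if p.1 = 2 * p.2 + 1 then 1 else 0

/-- The injection `(k,i) ↦ 2^{k+1} i + 2^k − 1`. -/
def emb : ℕ × ℕ → ℕ := fun q => 2 ^ (q.1 + 1) * q.2 + 2 ^ q.1 - 1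

open Classical in
/-- `φ^∞(a) = Σ_k β₂^k β₁ a α₁ α₂^k`: the matrix whose
`(2^{k+1}i + 2^k − 1, 2^{k+1}j + 2^k − 1)` entry is `a_{ij}`, all other entries `0`. -/
noncomputable def phiInf (a : ℕ × ℕ → A) : ℕ × ℕ → A := fun p =>
  if h : ∃ q : ℕ × ℕ × ℕ, emb (q.1, q.2.1) = p.1 ∧ emb (q.1, q.2.2) = p.2
  then a (h.choose.2.1, h.choose.2.2) else 0

/-! ### Auxiliary lemmas -/

lemma emb_succ (k i : ℕ) : emb (k, i) + 1 = 2 ^ k * (2 * i + 1) := by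
  have h : 1 ≤ 2 ^ k := Nat.one_le_two_pow
  have h1 : emb (k, i) + 1 = 2 ^ (k + 1) * i + 2 ^ k := by
    simp only [emb]; omega
  rw [h1, pow_succ]; ring

lemma pow2_odd_inj : ∀ (k : ℕ) {k' i i' : ℕ},
    2 ^ k * (2 * i + 1) = 2 ^ k' * (2 * i' + 1) → k = k' ∧ i = i' := by
  intro k
  induction k with
  | zero =>
    intro k' i i' h
    cases k' with
    | zero => simp only [pow_zero, one_mul] at h; omega
    | succ s =>
      exfalso
      rw [pow_zero, one_mul, pow_succ, mul_comm (2 ^ s) 2, mul_assoc] at h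
      omega
  | succ s ih =>
    intro k' i i' h
    cases k' with
    | zero =>
      exfalso
      rw [pow_zero, one_mul, pow_succ, mul_comm (2 ^ s) 2, mul_assoc] at h
      omega
    | succ s' =>
      rw [pow_succ, mul_comm (2 ^ s) 2, mul_assoc, pow_succ, mul_comm (2 ^ s') 2,
        mul_assoc] at h
      have h2 : 2 ^ s * (2 * i + 1) = 2 ^ s' * (2 * i' + 1) := by omega
      obtain ⟨hk, hi⟩ := ih h2
      exact ⟨by omega, hi⟩

lemma emb_inj {k i k' i' : ℕ} (h : emb (k, i) = emb (k', i')) : k = k' ∧ i = i' := by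
  apply pow2_odd_inj k
  rw [← emb_succ, ← emb_succ, h]

lemma emb_zero (i : ℕ) : emb (0, i) = 2 * i := by
  simp only [emb]
  omega

lemma emb_succ_k (k i : ℕ) : emb (k + 1, i) = 2 * emb (k, i) + 1 := by
  have h1 := emb_succ k i
  have h2 := emb_succ (k + 1) i
  rw [pow_succ, mul_right_comm] at h2
  omega

lemma phiInf_emb (a : ℕ × ℕ → A) (k i j : ℕ) :
    phiInf a (emb (k, i), emb (k, j)) = a (i, j) := by
  have h : ∃ q : ℕ × ℕ × ℕ, emb (q.1, q.2.1) = emb (k, i) ∧ emb (q.1, q.2.2) = emb (k, j) :=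
    ⟨(k, i, j), rfl, rfl⟩
  simp only [phiInf, dif_pos h]
  obtain ⟨h1, h2⟩ := h.choose_spec
  obtain ⟨hk, hi⟩ := emb_inj h1
  obtain ⟨_, hj⟩ := emb_inj h2
  rw [hi, hj]

lemma phiInf_ne (a : ℕ × ℕ → A) (p : ℕ × ℕ)
    (h : ∀ k i j : ℕ, p ≠ (emb (k, i), emb (k, j))) : phiInf a p = 0 := by
  simp only [phiInf]
  rw [dif_neg]
  rintro ⟨⟨k, i, j⟩, h1, h2⟩
  exact h k i j (Prod.ext_iff.2 ⟨h1.symm, h2.symm⟩)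

lemma phiInf_ne_zero {a : ℕ × ℕ → A} {p : ℕ × ℕ} (h : phiInf a p ≠ 0) :
    ∃ k i j : ℕ, p = (emb (k, i), emb (k, j)) := by
  by_contra hc
  push_neg at hc
  exact h (phiInf_ne a p hc)

lemma phiInf_even_odd (a : ℕ × ℕ → A) (i j : ℕ) : phiInf a (2 * i, 2 * j + 1) = 0 := by
  apply phiInf_ne
  intro k i' j' hp
  have h1 : 2 * i = emb (k, i') := congrArg Prod.fst hp
  have h2 : 2 * j + 1 = emb (k, j') := congrArg Prod.snd hp
  cases k with
  | zero => rw [emb_zero] at h2; omega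
  | succ s => rw [emb_succ_k] at h1; omega

lemma phiInf_odd_even (a : ℕ × ℕ → A) (i j : ℕ) : phiInf a (2 * i + 1, 2 * j) = 0 := by
  apply phiInf_ne
  intro k i' j' hp
  have h1 : 2 * i + 1 = emb (k, i') := congrArg Prod.fst hp
  have h2 : 2 * j = emb (k, j') := congrArg Prod.snd hp
  cases k with
  | zero => rw [emb_zero] at h1; omega
  | succ s => rw [emb_succ_k] at h2; omega

lemma phiInf_odd_odd (a : ℕ × ℕ → A) (i j : ℕ) :
    phiInf a (2 * i + 1, 2 * j + 1) = phiInf a (i, j) := by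
  by_cases h : ∃ k i' j' : ℕ, (i, j) = ((emb (k, i') : ℕ), (emb (k, j') : ℕ))
  · obtain ⟨k, i', j', hp⟩ := h
    have hi : i = emb (k, i') := congrArg Prod.fst hp
    have hj : j = emb (k, j') := congrArg Prod.snd hp
    have e1 : 2 * i + 1 = emb (k + 1, i') := by rw [emb_succ_k, hi]
    have e2 : 2 * j + 1 = emb (k + 1, j') := by rw [emb_succ_k, hj]
    rw [show ((2 * i + 1 : ℕ), (2 * j + 1 : ℕ)) = (emb (k + 1, i'), emb (k + 1, j'))
      from Prod.ext_iff.2 ⟨e1, e2⟩, hp, phiInf_emb, phiInf_emb]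
  · push_neg at h
    rw [phiInf_ne a (i, j) h, phiInf_ne]
    intro k i' j' hp
    have h1 : 2 * i + 1 = emb (k, i') := congrArg Prod.fst hp
    have h2 : 2 * j + 1 = emb (k, j') := congrArg Prod.snd hp
    cases k with
    | zero => rw [emb_zero] at h1; omega
    | succ s =>
      rw [emb_succ_k] at h1 h2
      exact h s i' j' (Prod.ext_iff.2 ⟨by omega, by omega⟩)

lemma embk_inj (k : ℕ) : Function.Injective (fun l => emb (k, l)) :=
  fun x y hxy => (emb_inj hxy).2

lemma bound_aux {S T : Set ℕ} (k : ℕ) (hT : T.Finite) {N : ℕ} (hTN : T.ncard ≤ N)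
    (hsub : S ⊆ (fun j => emb (k, j)) '' T) : S.Finite ∧ S.ncard ≤ N := by
  have himg : ((fun j => emb (k, j)) '' T).Finite := hT.image _
  refine ⟨himg.subset hsub, ?_⟩
  calc S.ncard ≤ ((fun j => emb (k, j)) '' T).ncard := Set.ncard_le_ncard hsub himg
    _ = T.ncard := Set.ncard_image_of_injective T (embk_inj k)
    _ ≤ N := hTN

lemma gCond_phiInf {a : ℕ × ℕ → A} (ha : gCond a) : gCond (phiInf a) := by
  obtain ⟨hfin, N, hN⟩ := ha
  constructor
  · apply Set.Finite.subset (hfin.insert 0)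
    rintro x ⟨p, rfl⟩
    by_cases h : phiInf a p = 0
    · rw [h]; exact Set.mem_insert 0 _
    · obtain ⟨k, i, j, rfl⟩ := phiInf_ne_zero h
      rw [phiInf_emb]
      exact Set.mem_insert_iff.2 (Or.inr ⟨(i, j), rfl⟩)
  · refine ⟨N, fun r => ?_⟩
    by_cases hr : ∃ km : ℕ × ℕ, r = emb km
    · obtain ⟨⟨k, m⟩, rfl⟩ := hr
      obtain ⟨hrf, hrn, hcf, hcn⟩ := hN m
      have hrow : {j | phiInf a (emb (k, m), j) ≠ 0} ⊆
          (fun j' => emb (k, j')) '' {j' | a (m, j') ≠ 0} := by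
        intro j hj
        obtain ⟨k', i', j', hp⟩ := phiInf_ne_zero hj
        have h1 : emb (k, m) = emb (k', i') := congrArg Prod.fst hp
        have h2 : j = emb (k', j') := congrArg Prod.snd hp
        obtain ⟨hk, hi⟩ := emb_inj h1
        subst hk; subst h2
        refine ⟨j', ?_, rfl⟩
        have := hj
        simp only [Set.mem_setOf_eq, phiInf_emb] at this
        exact this
      have hcol : {j | phiInf a (j, emb (k, m)) ≠ 0} ⊆
          (fun j' => emb (k, j')) '' {j' | a (j', m) ≠ 0} := by
        intro j hj
        obtain ⟨k', i', j', hp⟩ := phiInf_ne_zero hj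
        have h1 : j = emb (k', i') := congrArg Prod.fst hp
        have h2 : emb (k, m) = emb (k', j') := congrArg Prod.snd hp
        obtain ⟨hk, hjm⟩ := emb_inj h2
        subst hk; subst h1
        refine ⟨i', ?_, rfl⟩
        have := hj
        simp only [Set.mem_setOf_eq, phiInf_emb] at this
        exact this
      obtain ⟨f1, f2⟩ := bound_aux k hrf hrn hrow
      obtain ⟨f3, f4⟩ := bound_aux k hcf hcn hcol
      exact ⟨f1, f2, f3, f4⟩
    · push_neg at hr
      have hrow : {j | phiInf a (r, j) ≠ 0} = ∅ := by
        ext j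
        simp only [Set.mem_setOf_eq, Set.mem_empty_iff_false, iff_false, not_not]
        by_contra hj
        obtain ⟨k, i', j', hp⟩ := phiInf_ne_zero hj
        exact hr (k, i') (congrArg Prod.fst hp)
      have hcol : {j | phiInf a (j, r) ≠ 0} = ∅ := by
        ext j
        simp only [Set.mem_setOf_eq, Set.mem_empty_iff_false, iff_false, not_not]
        by_contra hj
        obtain ⟨k, i', j', hp⟩ := phiInf_ne_zero hj
        exact hr (k, j') (congrArg Prod.snd hp)
      rw [hrow, hcol]
      simp

lemma phiInf_add (a b : ℕ × ℕ → A) : phiInf (a + b) = phiInf a + phiInf b := by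
  funext p
  by_cases h : ∃ k i j : ℕ, p = ((emb (k, i) : ℕ), (emb (k, j) : ℕ))
  · obtain ⟨k, i, j, rfl⟩ := h
    simp only [Pi.add_apply, phiInf_emb]
  · push_neg at h
    simp only [Pi.add_apply, phiInf_ne _ _ h, add_zero]

lemma phiInf_mul (a b : ℕ × ℕ → A) : phiInf (gMul a b) = gMul (phiInf a) (phiInf b) := by
  funext p
  by_cases h : ∃ k i j : ℕ, p = ((emb (k, i) : ℕ), (emb (k, j) : ℕ))
  · obtain ⟨k, i, j, rfl⟩ := h
    rw [phiInf_emb]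
    show gMul a b (i, j) = ∑ᶠ m, phiInf a (emb (k, i), m) * phiInf b (m, emb (k, j))
    have hsupp : ∀ m ∈ Function.support
        (fun m => phiInf a (emb (k, i), m) * phiInf b (m, emb (k, j))),
        m ∈ Set.univ ↔ m ∈ Set.range (fun l => emb (k, l)) := by
      intro m hm
      simp only [Function.mem_support] at hm
      refine ⟨fun _ => ?_, fun _ => trivial⟩
      have h1 : phiInf a (emb (k, i), m) ≠ 0 := fun hz => hm (by rw [hz, zero_mul])
      obtain ⟨k', i', j', hp⟩ := phiInf_ne_zero h1
      have e1 : emb (k, i) = emb (k', i') := congrArg Prod.fst hp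
      have e2 : m = emb (k', j') := congrArg Prod.snd hp
      obtain ⟨hk, _⟩ := emb_inj e1
      exact ⟨j', by rw [e2, hk]⟩
    symm
    calc ∑ᶠ m, phiInf a (emb (k, i), m) * phiInf b (m, emb (k, j))
        = ∑ᶠ m ∈ Set.univ, phiInf a (emb (k, i), m) * phiInf b (m, emb (k, j)) :=
          (finsum_mem_univ _).symm
      _ = ∑ᶠ m ∈ Set.range (fun l => emb (k, l)),
            phiInf a (emb (k, i), m) * phiInf b (m, emb (k, j)) :=
          finsum_mem_inter_support_eq' _ _ _ hsupp
      _ = ∑ᶠ l, phiInf a (emb (k, i), emb (k, l)) * phiInf b (emb (k, l), emb (k, j)) :=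
          finsum_mem_range (embk_inj k)
      _ = ∑ᶠ l, a (i, l) * b (l, j) := by simp only [phiInf_emb]
      _ = gMul a b (i, j) := rfl
  · push_neg at h
    rw [phiInf_ne _ _ h]
    symm
    show ∑ᶠ m, phiInf a (p.1, m) * phiInf b (m, p.2) = 0
    apply finsum_eq_zero_of_forall_eq_zero
    intro m
    by_cases h1 : phiInf a (p.1, m) = 0
    · rw [h1, zero_mul]
    by_cases h2 : phiInf b (m, p.2) = 0
    · rw [h2, mul_zero]
    exfalso
    obtain ⟨k, i, l, hp1⟩ := phiInf_ne_zero h1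
    obtain ⟨k', l', j, hp2⟩ := phiInf_ne_zero h2
    have e1 : p.1 = emb (k, i) := congrArg Prod.fst hp1
    have em1 : m = emb (k, l) := congrArg Prod.snd hp1
    have em2 : m = emb (k', l') := congrArg Prod.fst hp2
    have e2 : p.2 = emb (k', j) := congrArg Prod.snd hp2
    obtain ⟨hk, _⟩ := emb_inj (em1 ▸ em2 : emb (k, l) = emb (k', l'))
    exact h k i j (Prod.ext_iff.2 ⟨e1, by rw [e2, ← hk]⟩)

lemma gMul_beta1_even (x : ℕ × ℕ → A) (i c : ℕ) : gMul beta1 x (2 * i, c) = x (i, c) := by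
  show ∑ᶠ j, beta1 ((2 * i : ℕ), j) * x (j, c) = x (i, c)
  rw [finsum_eq_single _ i]
  · simp [beta1]
  · intro j hj
    simp only [beta1]
    rw [if_neg (by omega), zero_mul]

lemma gMul_beta1_odd (x : ℕ × ℕ → A) (i c : ℕ) : gMul beta1 x (2 * i + 1, c) = 0 := by
  apply finsum_eq_zero_of_forall_eq_zero
  intro j
  simp only [beta1]
  rw [if_neg (by omega), zero_mul]

lemma gMul_alpha1_even (x : ℕ × ℕ → A) (r j : ℕ) : gMul x alpha1 (r, 2 * j) = x (r, j) := by
  show ∑ᶠ l, x (r, l) * alpha1 (l, (2 * j : ℕ)) = x (r, j)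
  rw [finsum_eq_single _ j]
  · simp [alpha1]
  · intro l hl
    simp only [alpha1]
    rw [if_neg (by omega), mul_zero]

lemma gMul_alpha1_odd (x : ℕ × ℕ → A) (r j : ℕ) : gMul x alpha1 (r, 2 * j + 1) = 0 := by
  apply finsum_eq_zero_of_forall_eq_zero
  intro l
  simp only [alpha1]
  rw [if_neg (by omega), mul_zero]

lemma gMul_beta2_odd (x : ℕ × ℕ → A) (i c : ℕ) : gMul beta2 x (2 * i + 1, c) = x (i, c) := by
  show ∑ᶠ j, beta2 ((2 * i + 1 : ℕ), j) * x (j, c) = x (i, c)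
  rw [finsum_eq_single _ i]
  · simp [beta2]
  · intro j hj
    simp only [beta2]
    rw [if_neg (by omega), zero_mul]

lemma gMul_beta2_even (x : ℕ × ℕ → A) (i c : ℕ) : gMul beta2 x (2 * i, c) = 0 := by
  apply finsum_eq_zero_of_forall_eq_zero
  intro j
  simp only [beta2]
  rw [if_neg (by omega), zero_mul]

lemma gMul_alpha2_odd (x : ℕ × ℕ → A) (r j : ℕ) : gMul x alpha2 (r, 2 * j + 1) = x (r, j) := by
  show ∑ᶠ l, x (r, l) * alpha2 (l, (2 * j + 1 : ℕ)) = x (r, j)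
  rw [finsum_eq_single _ j]
  · simp [alpha2]
  · intro l hl
    simp only [alpha2]
    rw [if_neg (by omega), mul_zero]

lemma gMul_alpha2_even (x : ℕ × ℕ → A) (r j : ℕ) : gMul x alpha2 (r, 2 * j) = 0 := by
  apply finsum_eq_zero_of_forall_eq_zero
  intro l
  simp only [alpha2]
  rw [if_neg (by omega), mul_zero]

lemma phiInf_sum (a : ℕ × ℕ → A) :
    gMul (gMul beta1 a) alpha1 + gMul (gMul beta2 (phiInf a)) alpha2 = phiInf a := by
  funext p
  obtain ⟨r, c⟩ := p
  rcases Nat.even_or_odd r with ⟨i, hr⟩ | ⟨i, hr⟩ <;>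
    rcases Nat.even_or_odd c with ⟨j, hc⟩ | ⟨j, hc⟩
  · have hr' : r = 2 * i := by omega
    have hc' : c = 2 * j := by omega
    subst hr'; subst hc'
    rw [Pi.add_apply, gMul_alpha1_even, gMul_beta1_even, gMul_alpha2_even, add_zero,
      ← emb_zero i, ← emb_zero j, phiInf_emb]
  · have hr' : r = 2 * i := by omega
    subst hr'; subst hc
    rw [Pi.add_apply, gMul_alpha1_odd, gMul_alpha2_odd, gMul_beta2_even, add_zero,
      phiInf_even_odd]
  · have hc' : c = 2 * j := by omega
    subst hr; subst hc'
    rw [Pi.add_apply, gMul_alpha1_even, gMul_beta1_odd, gMul_alpha2_even, add_zero,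
      phiInf_odd_even]
  · subst hr; subst hc
    rw [Pi.add_apply, gMul_alpha1_odd, gMul_alpha2_odd, gMul_beta2_odd, zero_add,
      phiInf_odd_odd]

/-- `φ^∞` has the announced matrix entries, preserves the cone condition, is a
(non-unital) ring endomorphism of `Γ(A)`, and satisfies `1 ⊕ φ^∞ = φ^∞`, that is,
`β₁ a α₁ + β₂ φ^∞(a) α₂ = φ^∞(a)`; this makes `Γ(A)` an infinite sum ring. -/
theorem stmt9 :
    (∀ (a : ℕ × ℕ → A) (k i j : ℕ), phiInf a (emb (k, i), emb (k, j)) = a (i, j)) ∧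
    (∀ (a : ℕ × ℕ → A) (p : ℕ × ℕ),
      (∀ k i j : ℕ, p ≠ (emb (k, i), emb (k, j))) → phiInf a p = 0) ∧
    (∀ a : ℕ × ℕ → A, gCond a → gCond (phiInf a)) ∧
    (∀ a b : ℕ × ℕ → A, phiInf (a + b) = phiInf a + phiInf b) ∧
    (∀ a b : ℕ × ℕ → A, gCond a → gCond b →
      phiInf (gMul a b) = gMul (phiInf a) (phiInf b)) ∧
    (∀ a : ℕ × ℕ → A, gCond a →
      gMul (gMul beta1 a) alpha1 + gMul (gMul beta2 (phiInf a)) alpha2 = phiInf a) :=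
  ⟨phiInf_emb, phiInf_ne, fun _ => gCond_phiInf, phiInf_add,
    fun a b _ _ => phiInf_mul a b, fun a _ => phiInf_sum a⟩
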